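/- Let [I,‖·‖_I] be a Banach weighted holomorphic ideal, let U be an open subset of a complex Banach space E with weight v, let F be a complex Banach space, and let f ∈ H_v^∞(U,F). Then f belongs to the closed injective hull (\bar{I})^inj(U,F) if and only if there exist a complex Banach space G, a mapping g ∈ I(U,G) and a function N : (0,∞) → (0,∞) such that ‖Σ_{i=1}^n λ_i v(x_i) f(x_i)‖ ≤ N(ε)‖Σ_{i=1}^n λ_i v(x_i) g(x_i)‖ + ε Σ_{i=1}^n |λ_i| for all n ∈ ℕ, λ_1,…,λ_n ∈ ℂ, x_1,…,x_n ∈ U and ε > 0. -/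

import Mathlib

open scoped ENNReal
open Set

noncomputable section

universe u v w

/-- A bundled complex Banach space. -/
structure BanachSp : Type (u + 1) where
  α : Type u
  [grp : NormedAddCommGroup α]
  [mod : NormedSpace ℂ α]
  [cpl : CompleteSpace α]

attribute [instance] BanachSp.grp BanachSp.mod BanachSp.cpl

instance : CoeSort BanachSp (Type u) := ⟨BanachSp.α⟩

section Defs

variable {E : Type u} {F : Type v} [NormedAddCommGroup E] [NormedSpace ℂ E]
  [NormedAddCommGroup F] [NormedSpace ℂ F]

/-- `v` is a weight on `U`: continuous and strictly positive there. -/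
def IsWeight (U : Set E) (v : E → ℝ) : Prop :=
  ContinuousOn v U ∧ ∀ x ∈ U, 0 < v x

/-- `f` belongs to `H_v^∞(U, F)`: holomorphic on `U` with `sup_{x ∈ U} v x * ‖f x‖ < ∞`. -/
def HvBdd (U : Set E) (v : E → ℝ) (f : E → F) : Prop :=
  DifferentiableOn ℂ f U ∧ BddAbove ((fun x => v x * ‖f x‖) '' U)

/-- The weighted supremum norm `‖f‖_v = sup_{x ∈ U} v x * ‖f x‖`. -/
def hvNorm (U : Set E) (v : E → ℝ) (f : E → F) : ℝ :=
  sSup ((fun x => v x * ‖f x‖) '' U)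

end Defs

section Iota

variable (F : Type u) [NormedAddCommGroup F] [NormedSpace ℂ F]

/-- The closed unit ball of the dual space `F*`. -/
def BallDual : Type u := {φ : StrongDual ℂ F // ‖φ‖ ≤ 1}

instance : Nonempty (BallDual F) := ⟨⟨0, by simp⟩⟩

/-- `ℓ∞(B_{F*})`, the space of bounded scalar functions on the closed unit ball of `F*`. -/
abbrev Linf : Type u := lp (fun _ : BallDual F => ℂ) ∞

/-- The canonical embedding `ι_F : F → ℓ∞(B_{F*})`, `⟨ι_F y, φ⟩ = φ y`. -/
def iotaFun (y : F) : Linf F :=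
  ⟨fun φ => φ.1 y, memℓp_infty ⟨‖y‖, by
    rintro r ⟨φ, rfl⟩
    calc ‖φ.1 y‖ ≤ ‖φ.1‖ * ‖y‖ := φ.1.le_opNorm y
      _ ≤ 1 * ‖y‖ := by
          have := φ.2
          exact mul_le_mul_of_nonneg_right this (norm_nonneg y)
      _ = ‖y‖ := one_mul _⟩⟩

/-- The canonical embedding `ι_F : F → ℓ∞(B_{F*})` as a continuous linear map. -/
def iota : F →L[ℂ] Linf F :=
  LinearMap.mkContinuous
    { toFun := iotaFun F
      map_add' := by
        intro y z
        apply lp.ext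
        rw [lp.coeFn_add]
        funext φ
        show φ.1 (y + z) = φ.1 y + φ.1 z
        exact map_add φ.1 y z
      map_smul' := by
        intro c y
        apply lp.ext
        rw [lp.coeFn_smul]
        funext φ
        show φ.1 (c • y) = c • φ.1 y
        exact map_smul φ.1 c y }
    1 (by
      intro y
      rw [one_mul]
      refine lp.norm_le_of_forall_le (norm_nonneg y) fun φ => ?_
      calc ‖φ.1 y‖ ≤ ‖φ.1‖ * ‖y‖ := φ.1.le_opNorm y
        _ ≤ 1 * ‖y‖ := mul_le_mul_of_nonneg_right φ.2 (norm_nonneg y)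
        _ = ‖y‖ := one_mul _)

/-- `ℓ∞(B_{F*})` as a bundled Banach space. -/
def LinfSp : BanachSp.{u} := ⟨Linf F⟩

end Iota

/-- An assignment of a class of weighted holomorphic mappings, together with a
"norm" function, to every component `(U, v, F)`. -/
structure WHAssignment : Type (u + 1) where
  mem : ∀ (E : BanachSp.{u}) (U : Set E) (v : E → ℝ) (F : BanachSp.{u}), (E → F) → Prop
  nrm : ∀ (E : BanachSp.{u}) (U : Set E) (v : E → ℝ) (F : BanachSp.{u}), (E → F) → ℝ

/-- `[I, ‖·‖_I]` is a normed weighted holomorphic ideal. -/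
structure IsNormedWHIdeal (I : WHAssignment.{u}) : Prop where
  mem_hv : ∀ (E : BanachSp.{u}) (U : Set E.α) (v : E.α → ℝ), IsOpen U → IsWeight U v →
    ∀ (F : BanachSp.{u}) (f : E.α → F.α), I.mem E U v F f → HvBdd U v f
  zero_mem : ∀ (E : BanachSp.{u}) (U : Set E.α) (v : E.α → ℝ), IsOpen U → IsWeight U v →
    ∀ (F : BanachSp.{u}), I.mem E U v F (fun _ => 0)
  add_mem : ∀ (E : BanachSp.{u}) (U : Set E.α) (v : E.α → ℝ), IsOpen U → IsWeight U v →
    ∀ (F : BanachSp.{u}) (f g : E.α → F.α), I.mem E U v F f → I.mem E U v F g →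
      I.mem E U v F (fun x => f x + g x)
  smul_mem : ∀ (E : BanachSp.{u}) (U : Set E.α) (v : E.α → ℝ), IsOpen U → IsWeight U v →
    ∀ (F : BanachSp.{u}) (c : ℂ) (f : E.α → F.α), I.mem E U v F f →
      I.mem E U v F (fun x => c • f x)
  nrm_nonneg : ∀ (E : BanachSp.{u}) (U : Set E.α) (v : E.α → ℝ), IsOpen U → IsWeight U v →
    ∀ (F : BanachSp.{u}) (f : E.α → F.α), I.mem E U v F f → 0 ≤ I.nrm E U v F f
  nrm_eq_zero : ∀ (E : BanachSp.{u}) (U : Set E.α) (v : E.α → ℝ), IsOpen U → IsWeight U v →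
    ∀ (F : BanachSp.{u}) (f : E.α → F.α), I.mem E U v F f → I.nrm E U v F f = 0 →
      ∀ x ∈ U, f x = 0
  nrm_add_le : ∀ (E : BanachSp.{u}) (U : Set E.α) (v : E.α → ℝ), IsOpen U → IsWeight U v →
    ∀ (F : BanachSp.{u}) (f g : E.α → F.α), I.mem E U v F f → I.mem E U v F g →
      I.nrm E U v F (fun x => f x + g x) ≤ I.nrm E U v F f + I.nrm E U v F g
  nrm_smul : ∀ (E : BanachSp.{u}) (U : Set E.α) (v : E.α → ℝ), IsOpen U → IsWeight U v →
    ∀ (F : BanachSp.{u}) (c : ℂ) (f : E.α → F.α), I.mem E U v F f →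
      I.nrm E U v F (fun x => c • f x) = ‖c‖ * I.nrm E U v F f
  hv_le_nrm : ∀ (E : BanachSp.{u}) (U : Set E.α) (v : E.α → ℝ), IsOpen U → IsWeight U v →
    ∀ (F : BanachSp.{u}) (f : E.α → F.α), I.mem E U v F f →
      hvNorm U v f ≤ I.nrm E U v F f
  unit_mem : ∀ (E : BanachSp.{u}) (U : Set E.α) (v : E.α → ℝ), IsOpen U → IsWeight U v →
    ∀ (F : BanachSp.{u}) (h : E.α → ℂ), HvBdd U v h → ∀ y : F.α,
      I.mem E U v F (fun x => h x • y) ∧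
        I.nrm E U v F (fun x => h x • y) = hvNorm U v h * ‖y‖
  comp_mem : ∀ (E : BanachSp.{u}) (U : Set E.α) (v : E.α → ℝ), IsOpen U → IsWeight U v →
    ∀ (V : Set E.α), IsOpen V → V ⊆ U →
    ∀ h : E.α → E.α, DifferentiableOn ℂ h V → Set.MapsTo h V U →
    ∀ c : ℝ, 0 ≤ c → (∀ x ∈ V, v x ≤ c * v (h x)) →
    ∀ (F G : BanachSp.{u}) (T : F.α →L[ℂ] G.α) (f : E.α → F.α), I.mem E U v F f →
      I.mem E V v G (fun x => T (f (h x))) ∧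
        I.nrm E V v G (fun x => T (f (h x))) ≤ ‖T‖ * I.nrm E U v F f * c

/-- `[I, ‖·‖_I]` is a Banach weighted holomorphic ideal: a normed one with complete components. -/
structure IsBanachWHIdeal (I : WHAssignment.{u}) extends IsNormedWHIdeal I : Prop where
  complete : ∀ (E : BanachSp.{u}) (U : Set E.α) (v : E.α → ℝ), IsOpen U → IsWeight U v →
    ∀ (F : BanachSp.{u}) (f : ℕ → E.α → F.α), (∀ n, I.mem E U v F (f n)) →
      (∀ ε : ℝ, 0 < ε → ∃ N : ℕ, ∀ m ≥ N, ∀ n ≥ N,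
        I.nrm E U v F (fun x => f m x - f n x) < ε) →
      ∃ g : E.α → F.α, I.mem E U v F g ∧
        ∀ ε : ℝ, 0 < ε → ∃ N : ℕ, ∀ n ≥ N, I.nrm E U v F (fun x => f n x - g x) < ε

/-- Injectivity of a normed weighted holomorphic ideal. -/
def WHInjective (I : WHAssignment.{u}) : Prop :=
  ∀ (E : BanachSp.{u}) (U : Set E.α) (v : E.α → ℝ), IsOpen U → IsWeight U v →
  ∀ (F G : BanachSp.{u}) (f : E.α → F.α), HvBdd U v f →
  ∀ ι : F.α →ₗᵢ[ℂ] G.α, I.mem E U v G (fun x => ι (f x)) →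
    I.mem E U v F f ∧ I.nrm E U v F f = I.nrm E U v G (fun x => ι (f x))

/-- The injective hull `[I^inj, ‖·‖_{I^inj}]` of a weighted holomorphic ideal. -/
def whInj (I : WHAssignment.{u}) : WHAssignment.{u} where
  mem E U v F f := HvBdd U v f ∧ I.mem E U v (LinfSp F.α) (fun x => iota F.α (f x))
  nrm E U v F f := I.nrm E U v (LinfSp F.α) (fun x => iota F.α (f x))

/-- The order relation `[I, ‖·‖_I] ≤ [J, ‖·‖_J]` between weighted holomorphic ideals. -/
def WHle (I J : WHAssignment.{u}) : Prop :=
  ∀ (E : BanachSp.{u}) (U : Set E.α) (v : E.α → ℝ), IsOpen U → IsWeight U v →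
  ∀ (F : BanachSp.{u}) (f : E.α → F.α), I.mem E U v F f →
    J.mem E U v F f ∧ J.nrm E U v F f ≤ I.nrm E U v F f

/-- The domination property: `‖Σ λᵢ v(xᵢ) f(xᵢ)‖ ≤ ‖Σ λᵢ v(xᵢ) g(xᵢ)‖` for all finite families. -/
def Dominates {E : Type u} {F : Type v} {G : Type w} [NormedAddCommGroup E] [NormedSpace ℂ E]
    [NormedAddCommGroup F] [NormedSpace ℂ F] [NormedAddCommGroup G] [NormedSpace ℂ G]
    (U : Set E) (v : E → ℝ) (f : E → F) (g : E → G) : Prop :=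
  ∀ (n : ℕ) (lam : Fin n → ℂ) (x : Fin n → E), (∀ i, x i ∈ U) →
    ‖∑ i, lam i • v (x i) • f (x i)‖ ≤ ‖∑ i, lam i • v (x i) • g (x i)‖


/-- An assignment of a class of operators and a "norm" to every pair of Banach spaces. -/
structure OpAssignment : Type (u + 1) where
  mem : ∀ (E F : BanachSp.{u}), (E.α →L[ℂ] F.α) → Prop
  nrm : ∀ (E F : BanachSp.{u}), (E.α →L[ℂ] F.α) → ℝ

/-- `A` is an operator ideal (no norm conditions). -/
structure IsOpIdeal (A : OpAssignment.{u}) : Prop where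
  zero_mem : ∀ (E F : BanachSp.{u}), A.mem E F 0
  add_mem : ∀ (E F : BanachSp.{u}) (S T : E.α →L[ℂ] F.α),
    A.mem E F S → A.mem E F T → A.mem E F (S + T)
  rank_one_mem : ∀ (E F : BanachSp.{u}) (φ : E.α →L[ℂ] ℂ) (y : F.α),
    A.mem E F (φ.smulRight y)
  comp_mem : ∀ (E₀ E F F₀ : BanachSp.{u}) (R : E₀.α →L[ℂ] E.α) (T : E.α →L[ℂ] F.α)
    (S : F.α →L[ℂ] F₀.α), A.mem E F T → A.mem E₀ F₀ ((S.comp T).comp R)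

/-- `[A, ‖·‖_A]` is a normed operator ideal in the sense of Pietsch. -/
structure IsNormedOpIdeal (A : OpAssignment.{u}) : Prop where
  zero_mem : ∀ (E F : BanachSp.{u}), A.mem E F 0
  add_mem : ∀ (E F : BanachSp.{u}) (S T : E.α →L[ℂ] F.α),
    A.mem E F S → A.mem E F T → A.mem E F (S + T)
  smul_mem : ∀ (E F : BanachSp.{u}) (c : ℂ) (T : E.α →L[ℂ] F.α),
    A.mem E F T → A.mem E F (c • T)
  nrm_nonneg : ∀ (E F : BanachSp.{u}) (T : E.α →L[ℂ] F.α), A.mem E F T → 0 ≤ A.nrm E F T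
  nrm_add_le : ∀ (E F : BanachSp.{u}) (S T : E.α →L[ℂ] F.α), A.mem E F S → A.mem E F T →
    A.nrm E F (S + T) ≤ A.nrm E F S + A.nrm E F T
  nrm_smul : ∀ (E F : BanachSp.{u}) (c : ℂ) (T : E.α →L[ℂ] F.α), A.mem E F T →
    A.nrm E F (c • T) = ‖c‖ * A.nrm E F T
  op_le_nrm : ∀ (E F : BanachSp.{u}) (T : E.α →L[ℂ] F.α), A.mem E F T → ‖T‖ ≤ A.nrm E F T
  rank_one_mem : ∀ (E F : BanachSp.{u}) (φ : E.α →L[ℂ] ℂ) (y : F.α),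
    A.mem E F (φ.smulRight y) ∧ A.nrm E F (φ.smulRight y) = ‖φ‖ * ‖y‖
  comp_mem : ∀ (E₀ E F F₀ : BanachSp.{u}) (R : E₀.α →L[ℂ] E.α) (T : E.α →L[ℂ] F.α)
    (S : F.α →L[ℂ] F₀.α), A.mem E F T → A.mem E₀ F₀ ((S.comp T).comp R) ∧
      A.nrm E₀ F₀ ((S.comp T).comp R) ≤ ‖S‖ * A.nrm E F T * ‖R‖

/-- `[A, ‖·‖_A]` is a Banach operator ideal. -/
structure IsBanachOpIdeal (A : OpAssignment.{u}) extends IsNormedOpIdeal A : Prop where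
  complete : ∀ (E F : BanachSp.{u}) (T : ℕ → (E.α →L[ℂ] F.α)), (∀ n, A.mem E F (T n)) →
    (∀ ε : ℝ, 0 < ε → ∃ N : ℕ, ∀ m ≥ N, ∀ n ≥ N, A.nrm E F (T m - T n) < ε) →
    ∃ S, A.mem E F S ∧ ∀ ε : ℝ, 0 < ε → ∃ N : ℕ, ∀ n ≥ N, A.nrm E F (T n - S) < ε

/-- Injectivity of a normed operator ideal. -/
def OpInjective (A : OpAssignment.{u}) : Prop :=
  ∀ (E F G : BanachSp.{u}) (ι : F.α →ₗᵢ[ℂ] G.α) (T : E.α →L[ℂ] F.α),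
    A.mem E G (ι.toContinuousLinearMap.comp T) →
      A.mem E F T ∧ A.nrm E F T = A.nrm E G (ι.toContinuousLinearMap.comp T)

/-- The injective hull `[A^inj, ‖·‖_{A^inj}]` of an operator ideal. -/
def opInj (A : OpAssignment.{u}) : OpAssignment.{u} where
  mem E F T := A.mem E (LinfSp F.α) ((iota F.α).comp T)
  nrm E F T := A.nrm E (LinfSp F.α) ((iota F.α).comp T)

/-- The closure `\bar{A}` of an operator ideal, under the operator norm. -/
def opClosure (A : OpAssignment.{u}) : OpAssignment.{u} where
  mem E F T := ∀ ε : ℝ, 0 < ε → ∃ S, A.mem E F S ∧ ‖T - S‖ ≤ ε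
  nrm E F T := ‖T‖

/-- The composition ideal `[A ∘ H_v^∞, ‖·‖_{A ∘ H_v^∞}]`. -/
def compWH (A : OpAssignment.{u}) : WHAssignment.{u} where
  mem E U v F f := ∃ (G : BanachSp.{u}) (T : G.α →L[ℂ] F.α) (g : E.α → G.α),
    A.mem G F T ∧ HvBdd U v g ∧ ∀ x ∈ U, f x = T (g x)
  nrm E U v F f := sInf {r | ∃ (G : BanachSp.{u}) (T : G.α →L[ℂ] F.α) (g : E.α → G.α),
    A.mem G F T ∧ HvBdd U v g ∧ (∀ x ∈ U, f x = T (g x)) ∧ r = A.nrm G F T * hvNorm U v g}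

/-- The closure of a weighted holomorphic ideal in `(H_v^∞, ‖·‖_v)`. -/
def whClosure (I : WHAssignment.{u}) : WHAssignment.{u} where
  mem E U v F f := HvBdd U v f ∧ ∀ ε : ℝ, 0 < ε → ∃ g : E.α → F.α,
    I.mem E U v F g ∧ ∀ x ∈ U, v x * ‖f x - g x‖ ≤ ε
  nrm E U v F f := hvNorm U v f



private lemma memℓp_one_finsupp {D : Type*} (μ : D →₀ ℂ) :
    Memℓp (fun a => μ a) (1 : ℝ≥0∞) := by
  apply memℓp_gen
  apply summable_of_ne_finset_zero (s := μ.support)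
  intro a ha
  simp [Finsupp.notMem_support_iff.mp ha]

private lemma norm_finsupp_lp {D : Type*} (μ : D →₀ ℂ) :
    ‖(⟨fun a => μ a, memℓp_one_finsupp μ⟩ : lp (fun _ : D => ℂ) 1)‖
      = ∑ a ∈ μ.support, ‖μ a‖ := by
  rw [lp.norm_eq_tsum_rpow (by norm_num) _]
  simp only [ENNReal.toReal_one, Real.rpow_one]
  rw [tsum_eq_sum (s := μ.support) (fun a ha => by
    show ‖μ a‖ = 0
    simp [Finsupp.notMem_support_iff.mp ha])]
  norm_num

private lemma sum_fin_eq_sum_support {D : Type*} {M : Type*} [AddCommMonoid M]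
    (μ : D →₀ ℂ) (F' : D → ℂ → M) :
    ∑ i : Fin μ.support.card, F' (μ.support.equivFin.symm i) (μ (μ.support.equivFin.symm i))
      = ∑ a ∈ μ.support, F' a (μ a) := by
  rw [← Finset.sum_coe_sort μ.support (fun a => F' a (μ a))]
  exact Equiv.sum_comp μ.support.equivFin.symm (fun a : μ.support => F' a (μ a))

section Backward

variable {E G F : Type*} [NormedAddCommGroup E] [NormedSpace ℂ E]
  [NormedAddCommGroup G] [NormedSpace ℂ G] [NormedAddCommGroup F] [NormedSpace ℂ F]

set_option maxHeartbeats 2000000 in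
private lemma key_ext (U : Set E) (v : E → ℝ) (f : E → F) (g : E → G)
    (Nε ε : ℝ) (hN : 0 < Nε) (hε : 0 < ε)
    (hdom : ∀ (n : ℕ) (lam : Fin n → ℂ) (x : Fin n → E), (∀ i, x i ∈ U) →
      ‖∑ i, lam i • v (x i) • f (x i)‖ ≤
        Nε * ‖∑ i, lam i • v (x i) • g (x i)‖ + ε * ∑ i, ‖lam i‖)
    (φ : F →L[ℂ] ℂ) (hφ : ‖φ‖ ≤ 1) :
    ∃ ψ : G →L[ℂ] ℂ, (∀ a : G, ‖ψ a‖ ≤ Nε * ‖a‖) ∧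
      ∀ x ∈ U, v x * ‖φ (f x) - ψ (g x)‖ ≤ ε := by
  classical
  let D := {x : E // x ∈ U}
  let L1 := lp (fun _ : D => ℂ) 1
  let X := WithLp 1 (G × L1)
  let j : (D →₀ ℂ) →ₗ[ℂ] L1 :=
    { toFun := fun μ => ⟨fun a => μ a, memℓp_one_finsupp μ⟩
      map_add' := fun μ ν => by
        apply lp.ext; rw [lp.coeFn_add]; funext a
        show (μ + ν) a = μ a + ν a; simp
      map_smul' := fun c μ => by
        apply lp.ext; rw [lp.coeFn_smul]; funext a
        show (c • μ) a = c • μ a; simp }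
  have hjnorm : ∀ μ : D →₀ ℂ, ‖j μ‖ = ∑ a ∈ μ.support, ‖μ a‖ := fun μ =>
    norm_finsupp_lp μ
  let A : (D →₀ ℂ) →ₗ[ℂ] G :=
    Finsupp.linearCombination ℂ (fun a : D => v a.1 • g a.1)
  let u : (D →₀ ℂ) →ₗ[ℂ] ℂ :=
    Finsupp.linearCombination ℂ (fun a : D => φ (v a.1 • f a.1))
  -- the fundamental estimate
  have key : ∀ μ : D →₀ ℂ, ‖u μ‖ ≤ Nε * ‖A μ‖ + ε * ∑ a ∈ μ.support, ‖μ a‖ := by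
    intro μ
    have h1 := sum_fin_eq_sum_support μ (fun a c => c • v a.1 • f a.1)
    have h2 := sum_fin_eq_sum_support μ (fun a c => c • v a.1 • g a.1)
    have h3 := sum_fin_eq_sum_support μ (fun a c => ‖c‖)
    have hd := hdom μ.support.card (fun i => μ (μ.support.equivFin.symm i))
      (fun i => (μ.support.equivFin.symm i).1.1)
      (fun i => (μ.support.equivFin.symm i).1.2)
    rw [h1, h2, h3] at hd
    have hu : u μ = φ (∑ a ∈ μ.support, μ a • v a.1 • f a.1) := by
      rw [map_sum]
      rw [Finsupp.linearCombination_apply, Finsupp.sum]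
      exact Finset.sum_congr rfl fun a _ => (map_smul φ (μ a) _).symm
    have hA : A μ = ∑ a ∈ μ.support, μ a • v a.1 • g a.1 := by
      rw [Finsupp.linearCombination_apply, Finsupp.sum]
    rw [hu, hA]
    calc ‖φ (∑ a ∈ μ.support, μ a • v a.1 • f a.1)‖
        ≤ ‖φ‖ * ‖∑ a ∈ μ.support, μ a • v a.1 • f a.1‖ := φ.le_opNorm _
      _ ≤ 1 * ‖∑ a ∈ μ.support, μ a • v a.1 • f a.1‖ :=
          mul_le_mul_of_nonneg_right hφ (norm_nonneg _)
      _ = ‖∑ a ∈ μ.support, μ a • v a.1 • f a.1‖ := one_mul _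
      _ ≤ Nε * ‖∑ a ∈ μ.support, μ a • v a.1 • g a.1‖ + ε * ∑ a ∈ μ.support, ‖μ a‖ := hd
  -- the map into X
  let B : (D →₀ ℂ) →ₗ[ℂ] X :=
    (WithLp.linearEquiv 1 ℂ (G × L1)).symm.toLinearMap ∘ₗ
      (LinearMap.prod ((Nε : ℂ) • A) ((ε : ℂ) • j))
  have hBfst : ∀ μ, (WithLp.linearEquiv 1 ℂ (G × L1) (B μ)).1 = (Nε : ℂ) • A μ := fun μ => rfl
  have hBsnd : ∀ μ, (WithLp.linearEquiv 1 ℂ (G × L1) (B μ)).2 = (ε : ℂ) • j μ := fun μ => rfl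
  have hXnorm : ∀ (a : G) (b : L1),
      ‖(WithLp.linearEquiv 1 ℂ (G × L1)).symm (a, b)‖ = ‖a‖ + ‖b‖ := by
    intro a b
    rw [WithLp.prod_norm_eq_add (by norm_num)]
    norm_num
  have hBnorm : ∀ μ, ‖B μ‖ = Nε * ‖A μ‖ + ε * ‖j μ‖ := by
    intro μ
    have : ‖B μ‖ = ‖(Nε : ℂ) • A μ‖ + ‖(ε : ℂ) • j μ‖ := hXnorm _ _
    rw [this, norm_smul, norm_smul, Complex.norm_real, Complex.norm_real,
      Real.norm_of_nonneg hN.le, Real.norm_of_nonneg hε.le]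
  have hBinj : Function.Injective B := by
    intro μ ν h
    have h2 : (ε : ℂ) • j μ = (ε : ℂ) • j ν := by
      rw [← hBsnd μ, ← hBsnd ν, h]
    have h3 : j μ = j ν := smul_right_injective L1 (by
      exact_mod_cast (Complex.ofReal_ne_zero.mpr hε.ne')) h2
    ext a
    have := congrArg (fun w : L1 => w a) h3
    exact this
  -- the functional on the range of B
  let eB := LinearEquiv.ofInjective B hBinj
  let f₀lin : LinearMap.range B →ₗ[ℂ] ℂ := u ∘ₗ (eB.symm : LinearMap.range B →ₗ[ℂ] (D →₀ ℂ))
  have hf₀ : ∀ w : LinearMap.range B, ‖f₀lin w‖ ≤ 1 * ‖w‖ := by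
    intro w
    have hw : B (eB.symm w) = (w : X) := by
      have := congrArg (Subtype.val) (eB.apply_symm_apply w)
      exact this
    have : ‖u (eB.symm w)‖ ≤ Nε * ‖A (eB.symm w)‖ + ε * ‖j (eB.symm w)‖ := by
      calc ‖u (eB.symm w)‖ ≤ Nε * ‖A (eB.symm w)‖ + ε * ∑ a ∈ (eB.symm w).support, ‖(eB.symm w) a‖ :=
            key _
        _ = Nε * ‖A (eB.symm w)‖ + ε * ‖j (eB.symm w)‖ := by rw [hjnorm]
    calc ‖f₀lin w‖ = ‖u (eB.symm w)‖ := rfl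
      _ ≤ Nε * ‖A (eB.symm w)‖ + ε * ‖j (eB.symm w)‖ := this
      _ = ‖B (eB.symm w)‖ := (hBnorm _).symm
      _ = ‖(w : X)‖ := by rw [hw]
      _ = 1 * ‖w‖ := (one_mul _).symm
  let f₀ : LinearMap.range B →L[ℂ] ℂ := f₀lin.mkContinuous 1 hf₀
  obtain ⟨gext, hgext, hgnorm⟩ := exists_extension_norm_eq (LinearMap.range B) f₀
  have hgnorm1 : ‖gext‖ ≤ 1 := by
    rw [hgnorm]
    exact LinearMap.mkContinuous_norm_le _ zero_le_one _
  -- the inclusion of G into X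
  let T : G →L[ℂ] X := LinearMap.mkContinuous
    ((WithLp.linearEquiv 1 ℂ (G × L1)).symm.toLinearMap ∘ₗ
      (LinearMap.prod ((Nε : ℂ) • LinearMap.id) 0)) Nε (by
        intro a
        have : ‖(WithLp.linearEquiv 1 ℂ (G × L1)).symm ((Nε : ℂ) • a, 0)‖
            = ‖(Nε : ℂ) • a‖ + ‖(0 : L1)‖ := hXnorm _ _
        calc ‖(WithLp.linearEquiv 1 ℂ (G × L1)).symm ((Nε : ℂ) • a, 0)‖
            = ‖(Nε : ℂ) • a‖ + ‖(0 : L1)‖ := this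
          _ = Nε * ‖a‖ := by
              rw [norm_zero, add_zero, norm_smul, Complex.norm_real,
                Real.norm_of_nonneg hN.le]
          _ ≤ Nε * ‖a‖ := le_rfl)
  refine ⟨gext.comp T, ?_, ?_⟩
  · intro a
    calc ‖gext (T a)‖ ≤ ‖gext‖ * ‖T a‖ := gext.le_opNorm _
      _ ≤ 1 * ‖T a‖ := mul_le_mul_of_nonneg_right hgnorm1 (norm_nonneg _)
      _ = ‖T a‖ := one_mul _
      _ ≤ Nε * ‖a‖ := by
          have h := hXnorm ((Nε : ℂ) • a) (0 : L1)
          calc ‖T a‖ = ‖(Nε : ℂ) • a‖ + ‖(0 : L1)‖ := h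
            _ = Nε * ‖a‖ := by
                rw [norm_zero, add_zero, norm_smul, Complex.norm_real,
                  Real.norm_of_nonneg hN.le]
            _ ≤ Nε * ‖a‖ := le_rfl
  · intro x hx
    set d : D := ⟨x, hx⟩ with hd
    set μx : D →₀ ℂ := Finsupp.single d 1 with hμx
    have hUx : u μx = φ (v x • f x) := by
      simp only [hμx, u, Finsupp.linearCombination_single, one_smul]
      rfl
    have hAx : A μx = v x • g x := by
      simp only [hμx, A, Finsupp.linearCombination_single, one_smul]
      rfl
    have hjx : ‖j μx‖ = 1 := by
      rw [hjnorm, hμx, Finsupp.support_single_ne_zero d one_ne_zero]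
      simp
    have hmem : B μx ∈ LinearMap.range B := LinearMap.mem_range_self B μx
    have hval : gext (B μx) = u μx := by
      have h1 : gext (B μx) = f₀ ⟨B μx, hmem⟩ := hgext ⟨B μx, hmem⟩
      have h3 : eB.symm ⟨B μx, hmem⟩ = μx := by
        apply hBinj
        exact congrArg Subtype.val (eB.apply_symm_apply ⟨B μx, hmem⟩)
      rw [h1]
      show u (eB.symm ⟨B μx, hmem⟩) = u μx
      rw [h3]
    have hdiffX : B μx - T (A μx)
        = (WithLp.linearEquiv 1 ℂ (G × L1)).symm (0, (ε : ℂ) • j μx) := by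
      rw [LinearEquiv.eq_symm_apply]
      rw [map_sub]
      have h1 : (WithLp.linearEquiv 1 ℂ (G × L1)) (B μx)
          = ((Nε : ℂ) • A μx, (ε : ℂ) • j μx) := rfl
      have h2 : (WithLp.linearEquiv 1 ℂ (G × L1)) (T (A μx))
          = ((Nε : ℂ) • A μx, (0 : L1)) := rfl
      rw [h1, h2, Prod.mk_sub_mk, sub_self, sub_zero]
    have hnormdiff : ‖gext (B μx) - gext (T (A μx))‖ ≤ ε := by
      rw [← map_sub, hdiffX]
      calc ‖gext ((WithLp.linearEquiv 1 ℂ (G × L1)).symm (0, (ε : ℂ) • j μx))‖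
          ≤ ‖gext‖ * ‖(WithLp.linearEquiv 1 ℂ (G × L1)).symm (0, (ε : ℂ) • j μx)‖ :=
            gext.le_opNorm _
        _ ≤ 1 * ‖(WithLp.linearEquiv 1 ℂ (G × L1)).symm (0, (ε : ℂ) • j μx)‖ :=
            mul_le_mul_of_nonneg_right hgnorm1 (norm_nonneg _)
        _ = ‖(0 : G)‖ + ‖(ε : ℂ) • j μx‖ := by rw [one_mul, hXnorm]
        _ = ε := by
            rw [norm_zero, zero_add, norm_smul, Complex.norm_real,
              Real.norm_of_nonneg hε.le, hjx, mul_one]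
    have hsmul1 : gext (B μx) = v x • φ (f x) := by
      rw [hval, hUx, φ.map_smul_of_tower]
    have hsmul2 : gext (T (A μx)) = v x • gext (T (g x)) := by
      rw [hAx]
      exact (gext.comp T).map_smul_of_tower (v x) (g x)
    have hfin : v x • (φ (f x) - gext (T (g x))) = gext (B μx) - gext (T (A μx)) := by
      rw [smul_sub, hsmul1, hsmul2]
    calc v x * ‖φ (f x) - (gext.comp T) (g x)‖
        ≤ |v x| * ‖φ (f x) - gext (T (g x))‖ :=
          mul_le_mul_of_nonneg_right (le_abs_self _) (norm_nonneg _)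
      _ = ‖v x • (φ (f x) - gext (T (g x)))‖ := by rw [norm_smul, Real.norm_eq_abs]
      _ = ‖gext (B μx) - gext (T (A μx))‖ := by rw [hfin]
      _ ≤ ε := hnormdiff

end Backward
-- continuation: assumes back.lean content (key_ext etc.) present above
section Assemble

variable {E G : Type*} [NormedAddCommGroup E] [NormedSpace ℂ E]
  [NormedAddCommGroup G] [NormedSpace ℂ G]
variable {F : Type u} [NormedAddCommGroup F] [NormedSpace ℂ F]

private lemma norm_iota (y : F) : ‖iota F y‖ = ‖y‖ := by
  refine le_antisymm (lp.norm_le_of_forall_le (norm_nonneg y) fun φ => ?_) ?_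
  · calc ‖(iota F y) φ‖ = ‖φ.1 y‖ := rfl
      _ ≤ ‖φ.1‖ * ‖y‖ := φ.1.le_opNorm y
      _ ≤ 1 * ‖y‖ := mul_le_mul_of_nonneg_right φ.2 (norm_nonneg y)
      _ = ‖y‖ := one_mul _
  · rcases eq_or_ne y 0 with rfl | hy
    · simp only [map_zero, norm_zero]
      exact le_rfl
    · obtain ⟨φ, hφ1, hφ2⟩ := exists_dual_vector ℂ y (norm_ne_zero_iff.mpr hy)
      have h1 : ‖y‖ = ‖(iota F y) ⟨φ, hφ1.le⟩‖ := by
        show ‖y‖ = ‖φ y‖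
        rw [hφ2]
        simp
      rw [h1]
      exact lp.norm_apply_le_norm ENNReal.top_ne_zero (iota F y) ⟨φ, hφ1.le⟩

private lemma exists_approx (U : Set E) (v : E → ℝ) (f : E → F) (g : E → G)
    (Nε ε : ℝ) (hN : 0 < Nε) (hε : 0 < ε) (hvpos : ∀ x ∈ U, 0 < v x)
    (hdom : ∀ (n : ℕ) (lam : Fin n → ℂ) (x : Fin n → E), (∀ i, x i ∈ U) →
      ‖∑ i, lam i • v (x i) • f (x i)‖ ≤
        Nε * ‖∑ i, lam i • v (x i) • g (x i)‖ + ε * ∑ i, ‖lam i‖) :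
    ∃ S : G →L[ℂ] Linf F, ∀ x ∈ U, v x * ‖iota F (f x) - S (g x)‖ ≤ ε := by
  choose ψ hψ1 hψ2 using fun φ : BallDual F =>
    key_ext U v f g Nε ε hN hε hdom φ.1 φ.2
  let Slin : G →ₗ[ℂ] Linf F :=
    { toFun := fun a => ⟨fun φ => ψ φ a, memℓp_infty ⟨Nε * ‖a‖, by
        rintro r ⟨φ, rfl⟩
        exact hψ1 φ a⟩⟩
      map_add' := fun a b => by
        apply lp.ext; rw [lp.coeFn_add]; funext φ
        show ψ φ (a + b) = ψ φ a + ψ φ b; simp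
      map_smul' := fun c a => by
        apply lp.ext; rw [lp.coeFn_smul]; funext φ
        show ψ φ (c • a) = c • ψ φ a; simp }
  let S : G →L[ℂ] Linf F := Slin.mkContinuous Nε (fun a =>
    lp.norm_le_of_forall_le (mul_nonneg hN.le (norm_nonneg a)) (fun φ => hψ1 φ a))
  refine ⟨S, fun x hx => ?_⟩
  have hvx := hvpos x hx
  have hcoord : ∀ φ : BallDual F, ‖(iota F (f x) - S (g x)) φ‖ ≤ ε / v x := by
    intro φ
    have h1 : (iota F (f x) - S (g x)) φ = iota F (f x) φ - S (g x) φ := by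
      rw [lp.coeFn_sub]; rfl
    rw [h1]
    rw [le_div_iff₀ hvx, mul_comm]
    exact hψ2 φ x hx
  have h2 : ‖iota F (f x) - S (g x)‖ ≤ ε / v x :=
    lp.norm_le_of_forall_le (div_nonneg hε.le hvx.le) hcoord
  calc v x * ‖iota F (f x) - S (g x)‖ ≤ v x * (ε / v x) :=
        mul_le_mul_of_nonneg_left h2 hvx.le
    _ = ε := by field_simp

end Assemble

private lemma backward_dir (I : WHAssignment.{u}) (hI : IsBanachWHIdeal I)
    (E : BanachSp.{u}) (U : Set E.α) (v : E.α → ℝ) (hU : IsOpen U) (hv : IsWeight U v)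
    (F : BanachSp.{u}) (f : E.α → F.α) (hf : HvBdd U v f)
    (G : BanachSp.{u}) (g : E.α → G.α) (N : ℝ → ℝ) (hg : I.mem E U v G g)
    (hNpos : ∀ ε : ℝ, 0 < ε → 0 < N ε)
    (hineq : ∀ (n : ℕ) (lam : Fin n → ℂ) (x : Fin n → E.α), (∀ i, x i ∈ U) →
      ∀ ε : ℝ, 0 < ε →
        ‖∑ i, lam i • v (x i) • f (x i)‖ ≤
          N ε * ‖∑ i, lam i • v (x i) • g (x i)‖ + ε * ∑ i, ‖lam i‖) :
    (whInj (whClosure I)).mem E U v F f := by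
  refine ⟨hf, ⟨?_, ?_⟩⟩
  · refine ⟨(iota F.α).differentiable.comp_differentiableOn hf.1, ?_⟩
    obtain ⟨M, hM⟩ := hf.2
    refine ⟨M, ?_⟩
    rintro r ⟨x, hx, rfl⟩
    show v x * ‖iota F.α (f x)‖ ≤ M
    rw [norm_iota]
    exact hM ⟨x, hx, rfl⟩
  · intro ε hε
    obtain ⟨S, hS⟩ := exists_approx U v f g (N ε) ε (hNpos ε hε) hε hv.2
      (fun n lam x hx => hineq n lam x hx ε hε)
    have hc := hI.toIsNormedWHIdeal.comp_mem E U v hU hv U hU subset_rfl id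
      differentiableOn_id (Set.mapsTo_id U) 1 zero_le_one (fun x _ => by simp)
      G (LinfSp F.α) S g hg
    exact ⟨fun x => S (g x), hc.1, hS⟩

set_option maxHeartbeats 1000000
set_option synthInstance.maxHeartbeats 1000000

/-- `ℓ∞`-sum of countably many copies of `Linf F`, realized as a flat `ℓ∞` space. -/
private abbrev GTsp (F : Type u) [NormedAddCommGroup F] [NormedSpace ℂ F] : Type u :=
  lp (fun _ : ℕ × BallDual F => ℂ) ∞

/-- Embedding of `Linf F` as the `k`-th block of `GTsp F`. -/
private def Jmap (F : Type u) [NormedAddCommGroup F] [NormedSpace ℂ F] (k : ℕ) :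
    Linf F →L[ℂ] GTsp F :=
  LinearMap.mkContinuous
    { toFun := fun y => ⟨fun p => if p.1 = k then y p.2 else 0, memℓp_infty ⟨‖y‖, by
        rintro s ⟨p, rfl⟩
        show ‖if p.1 = k then y p.2 else 0‖ ≤ ‖y‖
        split
        · exact lp.norm_apply_le_norm ENNReal.top_ne_zero y p.2
        · rw [norm_zero]; exact norm_nonneg y⟩⟩
      map_add' := fun y z => by
        apply lp.ext; simp only [lp.coeFn_add]; funext p
        show (if p.1 = k then (y + z) p.2 else 0)
          = (if p.1 = k then y p.2 else 0) + (if p.1 = k then z p.2 else 0)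
        by_cases h : p.1 = k
        · rw [if_pos h, if_pos h, if_pos h, lp.coeFn_add]; rfl
        · rw [if_neg h, if_neg h, if_neg h, add_zero]
      map_smul' := fun a y => by
        apply lp.ext; simp only [lp.coeFn_smul]; funext p
        show (if p.1 = k then (a • y) p.2 else 0)
          = a • (if p.1 = k then y p.2 else 0)
        by_cases h : p.1 = k
        · rw [if_pos h, if_pos h, lp.coeFn_smul]; rfl
        · rw [if_neg h, if_neg h, smul_zero] }
    1 (fun y => by
      rw [one_mul]
      refine lp.norm_le_of_forall_le (norm_nonneg y) fun p => ?_
      show ‖if p.1 = k then y p.2 else 0‖ ≤ ‖y‖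
      split
      · exact lp.norm_apply_le_norm ENNReal.top_ne_zero y p.2
      · rw [norm_zero]; exact norm_nonneg y)

private lemma Jmap_norm_le (F : Type u) [NormedAddCommGroup F] [NormedSpace ℂ F] (k : ℕ) :
    ‖Jmap F k‖ ≤ 1 :=
  LinearMap.mkContinuous_norm_le _ zero_le_one _

private lemma forward_dir (I : WHAssignment.{u}) (hI : IsBanachWHIdeal I)
    (E : BanachSp.{u}) (U : Set E.α) (v : E.α → ℝ) (hU : IsOpen U) (hv : IsWeight U v)
    (F : BanachSp.{u}) (f : E.α → F.α)
    (hmem : (whInj (whClosure I)).mem E U v F f) :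
    ∃ (G : BanachSp.{u}) (g : E.α → G.α) (N : ℝ → ℝ), I.mem E U v G g ∧
      (∀ ε : ℝ, 0 < ε → 0 < N ε) ∧
      ∀ (n : ℕ) (lam : Fin n → ℂ) (x : Fin n → E.α), (∀ i, x i ∈ U) →
        ∀ ε : ℝ, 0 < ε →
          ‖∑ i, lam i • v (x i) • f (x i)‖ ≤
            N ε * ‖∑ i, lam i • v (x i) • g (x i)‖ + ε * ∑ i, ‖lam i‖ := by
  classical
  obtain ⟨hfB, hiB, happ⟩ := hmem
  choose hfun hfmem happrox using fun n : ℕ => happ (1/((n:ℝ)+1)) (by positivity)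
  let hfun2 : ℕ → E.α → Linf F.α := fun n => hfun n
  let GTB : BanachSp.{u} := ⟨GTsp F.α⟩
  set r : ℕ → ℝ := fun n => I.nrm E U v (LinfSp F.α) (hfun n) with hrdef
  have hr0 : ∀ n, 0 ≤ r n := fun n =>
    hI.toIsNormedWHIdeal.nrm_nonneg E U v hU hv _ _ (hfmem n)
  set c : ℕ → ℝ := fun n => (1/2 : ℝ)^n / (1 + r n) with hcdef
  have hc0 : ∀ n, 0 < c n := fun n => div_pos (by positivity) (by linarith [hr0 n])
  let J : ℕ → (Linf F.α →L[ℂ] GTsp F.α) := fun k => Jmap F.α k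
  have hJnorm : ∀ k, ‖J k‖ ≤ 1 := fun k => Jmap_norm_le F.α k
  let term : ℕ → E.α → GTsp F.α := fun k x => ((c k : ℂ) • J k) (hfun2 k x)
  have htmem : ∀ k, I.mem E U v GTB (term k) := by
    intro k
    exact (hI.toIsNormedWHIdeal.comp_mem E U v hU hv U hU subset_rfl id
      differentiableOn_id (Set.mapsTo_id U) 1 zero_le_one (fun x _ => by simp)
      (LinfSp F.α) GTB ((c k : ℂ) • J k) (hfun k) (hfmem k)).1
  have htnrm : ∀ k, I.nrm E U v GTB (term k) ≤ (1/2:ℝ)^k := by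
    intro k
    have hcm := hI.toIsNormedWHIdeal.comp_mem E U v hU hv U hU subset_rfl id
      differentiableOn_id (Set.mapsTo_id U) 1 zero_le_one (fun x _ => by simp)
      (LinfSp F.α) GTB ((c k : ℂ) • J k) (hfun k) (hfmem k)
    have h1 : ‖(c k : ℂ) • J k‖ ≤ c k := by
      refine (ContinuousLinearMap.opNorm_smul_le _ _).trans ?_
      rw [Complex.norm_real, Real.norm_of_nonneg (hc0 k).le]
      calc c k * ‖J k‖ ≤ c k * 1 := mul_le_mul_of_nonneg_left (hJnorm k) (hc0 k).le
        _ = c k := mul_one _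
    have hrk := hr0 k
    have hpk : (0:ℝ) < (1/2:ℝ)^k := by positivity
    calc I.nrm E U v GTB (term k) ≤ ‖(c k : ℂ) • J k‖ * r k * 1 := hcm.2
      _ ≤ c k * r k := by
          rw [mul_one]
          exact mul_le_mul_of_nonneg_right h1 hrk
      _ ≤ (1/2:ℝ)^k := by
          simp only [hcdef]
          rw [div_mul_eq_mul_div, div_le_iff₀ (by linarith)]
          nlinarith
  have hsum : ∀ s : Finset ℕ, I.mem E U v GTB (fun x => ∑ k ∈ s, term k x) ∧
      I.nrm E U v GTB (fun x => ∑ k ∈ s, term k x) ≤ ∑ k ∈ s, (1/2:ℝ)^k := by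
    intro s
    induction s using Finset.cons_induction with
    | empty =>
      have hz := hI.toIsNormedWHIdeal.zero_mem E U v hU hv GTB
      have hs0 := hI.toIsNormedWHIdeal.nrm_smul E U v hU hv GTB 0 (fun _ => 0) hz
      have h0 : I.nrm E U v GTB (fun _ => (0 : GTsp F.α)) = 0 := by simpa using hs0
      constructor
      · simpa using hz
      · simpa using h0.le
    | cons a s ha ih =>
      have hadd := hI.toIsNormedWHIdeal.add_mem E U v hU hv GTB (term a)
        (fun x => ∑ k ∈ s, term k x) (htmem a) ih.1
      have haddn := hI.toIsNormedWHIdeal.nrm_add_le E U v hU hv GTB (term a)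
        (fun x => ∑ k ∈ s, term k x) (htmem a) ih.1
      constructor
      · simpa only [Finset.sum_cons] using hadd
      · calc I.nrm E U v GTB (fun x => ∑ k ∈ Finset.cons a s ha, term k x)
            = I.nrm E U v GTB (fun x => term a x + ∑ k ∈ s, term k x) := by
              simp only [Finset.sum_cons]
          _ ≤ I.nrm E U v GTB (term a) + I.nrm E U v GTB (fun x => ∑ k ∈ s, term k x) := haddn
          _ ≤ (1/2:ℝ)^a + ∑ k ∈ s, (1/2:ℝ)^k := add_le_add (htnrm a) ih.2
          _ = ∑ k ∈ Finset.cons a s ha, (1/2:ℝ)^k := (Finset.sum_cons ha).symm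
  let Sn : ℕ → E.α → GTsp F.α := fun n x => ∑ k ∈ Finset.range (n+1), term k x
  have hdiff : ∀ m n : ℕ, n ≤ m → I.mem E U v GTB (fun x => Sn m x - Sn n x) ∧
      I.nrm E U v GTB (fun x => Sn m x - Sn n x) ≤ (1/2:ℝ)^n := by
    intro m n hnm
    have hfe : (fun x => Sn m x - Sn n x)
        = fun x => ∑ k ∈ Finset.Ico (n+1) (m+1), term k x := by
      funext x
      rw [Finset.sum_Ico_eq_sub _ (by omega)]
    have hb : ∑ k ∈ Finset.Ico (n+1) (m+1), (1/2:ℝ)^k ≤ (1/2:ℝ)^n := by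
      rw [Finset.sum_Ico_eq_sum_range]
      calc ∑ i ∈ Finset.range (m+1-(n+1)), (1/2:ℝ)^(n+1+i)
          = (1/2:ℝ)^(n+1) * ∑ i ∈ Finset.range (m+1-(n+1)), (1/2:ℝ)^i := by
            rw [Finset.mul_sum]
            exact Finset.sum_congr rfl fun i _ => pow_add _ _ _
        _ ≤ (1/2:ℝ)^(n+1) * 2 :=
            mul_le_mul_of_nonneg_left (sum_geometric_two_le _) (by positivity)
        _ = (1/2:ℝ)^n := by rw [pow_succ]; ring
    rw [hfe]
    exact ⟨(hsum _).1, (hsum _).2.trans hb⟩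
  have hCauchy : ∀ ε : ℝ, 0 < ε → ∃ Nn : ℕ, ∀ m ≥ Nn, ∀ n ≥ Nn,
      I.nrm E U v GTB (fun x => Sn m x - Sn n x) < ε := by
    intro ε hε
    obtain ⟨Nn, hNn⟩ := exists_pow_lt_of_lt_one hε (by norm_num : (1/2:ℝ) < 1)
    refine ⟨Nn, fun m hm n hn => ?_⟩
    have hhalf : ∀ a : ℕ, a ≥ Nn → ((1:ℝ)/2)^a ≤ (1/2:ℝ)^Nn := fun a hb =>
      pow_le_pow_of_le_one (by norm_num) (by norm_num) hb
    rcases le_total n m with h | h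
    · calc I.nrm E U v GTB (fun x => Sn m x - Sn n x) ≤ (1/2:ℝ)^n := (hdiff m n h).2
        _ ≤ (1/2:ℝ)^Nn := hhalf n hn
        _ < ε := hNn
    · have hmem' := (hdiff n m h).1
      have hsm := hI.toIsNormedWHIdeal.nrm_smul E U v hU hv GTB (-1)
        (fun x => Sn n x - Sn m x) hmem'
      have hfe : (fun x => Sn m x - Sn n x)
          = (fun x => (-1:ℂ) • (fun y => Sn n y - Sn m y) x) := by
        funext x; simp
      rw [hfe, hsm]
      simp only [norm_neg, norm_one, one_mul]
      calc I.nrm E U v GTB (fun x => Sn n x - Sn m x) ≤ (1/2:ℝ)^m := (hdiff n m h).2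
        _ ≤ (1/2:ℝ)^Nn := hhalf m hm
        _ < ε := hNn
  obtain ⟨g, hgmem, hgconv⟩ := hI.complete E U v hU hv GTB Sn (fun n => (hsum _).1) hCauchy
  have hpt : ∀ (d : E.α → GTsp F.α), I.mem E U v GTB d → ∀ x ∈ U,
      v x * ‖d x‖ ≤ I.nrm E U v GTB d := by
    intro d hd x hx
    exact le_trans (le_csSup (hI.toIsNormedWHIdeal.mem_hv E U v hU hv GTB d hd).2 ⟨x, hx, rfl⟩)
      (hI.toIsNormedWHIdeal.hv_le_nrm E U v hU hv GTB d hd)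
  have hdmem : ∀ n, I.mem E U v GTB (fun x => Sn n x - g x) := by
    intro n
    have h1 := hI.toIsNormedWHIdeal.smul_mem E U v hU hv GTB (-1) g hgmem
    have h2 := hI.toIsNormedWHIdeal.add_mem E U v hU hv GTB (Sn n)
      (fun x => (-1:ℂ) • g x) (hsum _).1 h1
    have hfe : (fun x => Sn n x - g x) = (fun x => Sn n x + (-1:ℂ) • g x) := by
      funext x; simp [sub_eq_add_neg]
    rw [hfe]; exact h2
  have hSnk : ∀ (n k : ℕ) (x : E.α) (φ : BallDual F.α), k ≤ n →
      (Sn n x) (k, φ) = (c k : ℂ) • (hfun2 k x φ) := by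
    intro n k x φ hkn
    have h1 : (Sn n x) (k, φ) = ∑ j ∈ Finset.range (n+1), (term j x) (k, φ) := by
      have hcs := lp.coeFn_sum (fun j => term j x) (Finset.range (n+1))
      calc (Sn n x) (k, φ) = (∑ j ∈ Finset.range (n+1), term j x) (k, φ) := rfl
        _ = ∑ j ∈ Finset.range (n+1), (term j x) (k, φ) := by rw [hcs, Finset.sum_apply]
    have h2 : ∀ j, (term j x) (k, φ) = (c j : ℂ) • (if k = j then hfun2 j x φ else 0) := by
      intro j
      calc (term j x) (k, φ) = ((c j : ℂ) • (J j (hfun2 j x) : GTsp F.α)) (k, φ) := rfl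
        _ = (c j : ℂ) • ((J j (hfun2 j x) : GTsp F.α) (k, φ)) := by rw [lp.coeFn_smul]; rfl
        _ = (c j : ℂ) • (if k = j then hfun2 j x φ else 0) := rfl
    rw [h1]
    simp only [h2, smul_ite, smul_zero]
    rw [Finset.sum_ite_eq]
    rw [if_pos (Finset.mem_range.mpr (by omega))]
  have hgc : ∀ x ∈ U, ∀ (k : ℕ) (φ : BallDual F.α),
      (g x) (k, φ) = (c k : ℂ) • (hfun2 k x φ) := by
    intro x hx k φ
    have hvx := hv.2 x hx
    have key : ∀ δ : ℝ, 0 < δ → ‖(g x) (k, φ) - (c k : ℂ) • (hfun2 k x φ)‖ < δ := by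
      intro δ hδ
      obtain ⟨Nn, hNn⟩ := hgconv (δ * v x) (by positivity)
      set n := max Nn k with hn
      have h1 := hNn n (le_max_left _ _)
      have h2 := hpt (fun y => Sn n y - g y) (hdmem n) x hx
      have h3 : v x * ‖Sn n x - g x‖ < δ * v x := lt_of_le_of_lt h2 h1
      have h4 : ‖Sn n x - g x‖ < δ := by
        by_contra hcon
        push_neg at hcon
        nlinarith
      have h5 : ‖(Sn n x - g x) (k, φ)‖ ≤ ‖Sn n x - g x‖ :=
        lp.norm_apply_le_norm ENNReal.top_ne_zero _ (k, φ)
      have h6 : (Sn n x - g x) (k, φ) = (c k : ℂ) • (hfun2 k x φ) - (g x) (k, φ) := by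
        rw [lp.coeFn_sub]
        show (Sn n x) (k, φ) - (g x) (k, φ) = _
        rw [hSnk n k x φ (le_max_right _ _)]
      calc ‖(g x) (k, φ) - (c k : ℂ) • (hfun2 k x φ)‖
          = ‖(c k : ℂ) • (hfun2 k x φ) - (g x) (k, φ)‖ := norm_sub_rev _ _
        _ = ‖(Sn n x - g x) (k, φ)‖ := by rw [h6]
        _ ≤ ‖Sn n x - g x‖ := h5
        _ < δ := h4
    have h0 : ‖(g x) (k, φ) - (c k : ℂ) • (hfun2 k x φ)‖ ≤ 0 := by
      by_contra hcon
      push_neg at hcon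
      exact absurd (key _ hcon) (lt_irrefl _)
    exact sub_eq_zero.mp (norm_le_zero_iff.mp h0)
  refine ⟨GTB, g, fun ε => (c (Nat.ceil (1/ε)))⁻¹, hgmem,
    fun ε hε => inv_pos.mpr (hc0 _), ?_⟩
  intro n lam x hxU ε hε
  show ‖∑ i, lam i • v (x i) • f (x i)‖ ≤
    (c (Nat.ceil (1/ε)))⁻¹ * ‖∑ i, lam i • v (x i) • g (x i)‖ + ε * ∑ i, ‖lam i‖
  set K := Nat.ceil (1/ε) with hKdef
  have hm : 1/((K:ℝ)+1) ≤ ε := by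
    have h1 : 1/ε ≤ (K:ℝ) := Nat.le_ceil _
    rw [div_le_iff₀ (by positivity)]
    have h2 : (1:ℝ) = ε * (1/ε) := by field_simp
    calc (1:ℝ) = ε * (1/ε) := h2
      _ ≤ ε * ((K:ℝ)+1) := by nlinarith
  have hiso : ‖∑ i, lam i • v (x i) • f (x i)‖
      = ‖∑ i, lam i • v (x i) • iota F.α (f (x i))‖ := by
    rw [← norm_iota (∑ i, lam i • v (x i) • f (x i))]
    congr 1
    rw [map_sum]
    exact Finset.sum_congr rfl fun i _ => by
      rw [map_smul, (iota F.α).map_smul_of_tower]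
  have happx : ∀ i, v (x i) * ‖iota F.α (f (x i)) - hfun2 K (x i)‖ ≤ 1/((K:ℝ)+1) :=
    fun i => happrox K (x i) (hxU i)
  have htri : ‖∑ i, lam i • v (x i) • iota F.α (f (x i))‖ ≤
      ‖∑ i, lam i • v (x i) • hfun2 K (x i)‖ + ε * ∑ i, ‖lam i‖ := by
    have hdec : ∑ i, lam i • v (x i) • iota F.α (f (x i))
        = ∑ i, lam i • v (x i) • hfun2 K (x i)
          + ∑ i, lam i • v (x i) • (iota F.α (f (x i)) - hfun2 K (x i)) := by
      rw [← Finset.sum_add_distrib]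
      refine Finset.sum_congr rfl fun i _ => ?_
      simp only [smul_sub]
      abel
    rw [hdec]
    refine (norm_add_le _ _).trans (add_le_add_right ?_ _)
    calc ‖∑ i, lam i • v (x i) • (iota F.α (f (x i)) - hfun2 K (x i))‖
        ≤ ∑ i, ‖lam i • v (x i) • (iota F.α (f (x i)) - hfun2 K (x i))‖ := norm_sum_le _ _
      _ ≤ ∑ i, ‖lam i‖ * ε := by
          refine Finset.sum_le_sum fun i _ => ?_
          rw [norm_smul, norm_smul, Real.norm_eq_abs, abs_of_nonneg (hv.2 _ (hxU i)).le]
          calc ‖lam i‖ * (v (x i) * ‖iota F.α (f (x i)) - hfun2 K (x i)‖)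
              ≤ ‖lam i‖ * (1/((K:ℝ)+1)) :=
                mul_le_mul_of_nonneg_left (happx i) (norm_nonneg _)
            _ ≤ ‖lam i‖ * ε := mul_le_mul_of_nonneg_left hm (norm_nonneg _)
      _ = ε * ∑ i, ‖lam i‖ := by rw [← Finset.sum_mul, mul_comm]
  set w : GTsp F.α := ∑ i, lam i • v (x i) • g (x i) with hwdef
  have hsumφ : ∀ φ : BallDual F.α, (∑ i, lam i • v (x i) • hfun2 K (x i) : Linf F.α) φ
      = ∑ i, lam i • v (x i) • (hfun2 K (x i) φ) := by
    intro φ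
    rw [lp.coeFn_sum, Finset.sum_apply]
    refine Finset.sum_congr rfl fun i _ => ?_
    rw [lp.coeFn_smul, lp.coeFn_smul]
    rfl
  have hwφ : ∀ φ : BallDual F.α, w (K, φ)
      = (c K : ℂ) • ∑ i, lam i • v (x i) • (hfun2 K (x i) φ) := by
    intro φ
    have h1 : w (K, φ) = ∑ i, (lam i • v (x i) • g (x i) : GTsp F.α) (K, φ) := by
      rw [hwdef, lp.coeFn_sum, Finset.sum_apply]
    rw [h1, Finset.smul_sum]
    refine Finset.sum_congr rfl fun i _ => ?_
    have h2 : (lam i • v (x i) • g (x i) : GTsp F.α) (K, φ)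
        = lam i • v (x i) • ((g (x i)) (K, φ)) := by
      rw [lp.coeFn_smul, lp.coeFn_smul]; rfl
    rw [h2, hgc (x i) (hxU i) K φ, smul_comm (v (x i)) ((c K : ℂ)),
      smul_comm (lam i) ((c K : ℂ))]
  have h3 : ‖∑ i, lam i • v (x i) • hfun2 K (x i)‖ ≤ (c K)⁻¹ * ‖w‖ := by
    refine lp.norm_le_of_forall_le
      (mul_nonneg (inv_nonneg.mpr (hc0 K).le) (norm_nonneg w)) fun φ => ?_
    rw [hsumφ φ]
    have h4 : (c K) * ‖∑ i, lam i • v (x i) • (hfun2 K (x i) φ)‖ = ‖w (K, φ)‖ := by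
      rw [hwφ φ, norm_smul, Complex.norm_real, Real.norm_of_nonneg (hc0 K).le]
    have h5 : ‖w (K, φ)‖ ≤ ‖w‖ := lp.norm_apply_le_norm ENNReal.top_ne_zero w (K, φ)
    rw [inv_mul_eq_div, le_div_iff₀ (hc0 K), mul_comm, h4]
    exact h5
  calc ‖∑ i, lam i • v (x i) • f (x i)‖
      = ‖∑ i, lam i • v (x i) • iota F.α (f (x i))‖ := hiso
    _ ≤ ‖∑ i, lam i • v (x i) • hfun2 K (x i)‖ + ε * ∑ i, ‖lam i‖ := htri
    _ ≤ (c K)⁻¹ * ‖w‖ + ε * ∑ i, ‖lam i‖ := add_le_add_left h3 _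

/-- for a Banach weighted holomorphic ideal, the closed injective hull is
characterized by a single mapping `g` and a function `N : (0, ∞) → (0, ∞)`. -/
theorem closed_injective_hull_ehrling_banach (I : WHAssignment.{u})
    (hI : IsBanachWHIdeal I)
    (E : BanachSp.{u}) (U : Set E.α) (v : E.α → ℝ) (hU : IsOpen U) (hv : IsWeight U v)
    (F : BanachSp.{u}) (f : E.α → F.α) (hf : HvBdd U v f) :
    (whInj (whClosure I)).mem E U v F f ↔
      ∃ (G : BanachSp.{u}) (g : E.α → G.α) (N : ℝ → ℝ), I.mem E U v G g ∧
        (∀ ε : ℝ, 0 < ε → 0 < N ε) ∧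
        ∀ (n : ℕ) (lam : Fin n → ℂ) (x : Fin n → E.α), (∀ i, x i ∈ U) →
          ∀ ε : ℝ, 0 < ε →
            ‖∑ i, lam i • v (x i) • f (x i)‖ ≤
              N ε * ‖∑ i, lam i • v (x i) • g (x i)‖ + ε * ∑ i, ‖lam i‖ := by
  constructor
  · intro hmem
    exact forward_dir I hI E U v hU hv F f hmem
  · rintro ⟨G, g, N, hgmem, hNpos, hineq⟩
    exact backward_dir I hI E U v hU hv F f hf G g N hgmem hNpos hineq

end
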